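/- In a finite Markov chain (an MDP with a single action), d0 is boundedly weakly synchronizing in T if and only if some state of T ∩ E is reachable in the underlying directed graph from Supp(d0), where E is the union of recurrent classes; moreover in that case liminf over periods gives M_i(T) ≥ α0·α^{n+n²} for infinitely many i. -/

import Mathlib

open scoped BigOperators
open Classical Filter

/-- A finite Markov decision process with real transition probabilities. -/
structure MDP (Q A : Type) [Fintype Q] [Fintype A] where
  δ : Q → A → Q → ℝ
  δ_nonneg : ∀ q a q', 0 ≤ δ q a q'
  δ_sum : ∀ q a, ∑ q', δ q a q' = 1

namespace MDP

variable {Q A : Type} [Fintype Q] [Fintype A]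

/-- `d` is a probability distribution. -/
def IsDist (d : Q → ℝ) : Prop := (∀ q, 0 ≤ d q) ∧ ∑ q, d q = 1

/-- A (randomized, history-dependent) strategy maps a history (list of past
state-action pairs) and the current state to a distribution over actions. -/
def IsStrategy (σ : List (Q × A) → Q → A → ℝ) : Prop :=
  (∀ h q a, 0 ≤ σ h q a) ∧ ∀ h q, ∑ a, σ h q a = 1

/-- The probability of the finite path `qs` (with actions `as`) of length `i`,
under strategy `σ` from initial distribution `d0`. -/
noncomputable def pathProb (M : MDP Q A) (σ : List (Q × A) → Q → A → ℝ)
    (d0 : Q → ℝ) (i : ℕ) (qs : Fin (i + 1) → Q) (as : Fin i → A) : ℝ :=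
  d0 (qs 0) * ∏ j : Fin i,
    (σ (List.ofFn (fun k : Fin j.val =>
          (qs ⟨k.val, by have := k.isLt; have := j.isLt; omega⟩,
           as ⟨k.val, by have := k.isLt; have := j.isLt; omega⟩)))
        (qs j.castSucc) (as j))
      * M.δ (qs j.castSucc) (as j) (qs j.succ)

/-- The distribution over states after `i` steps (`M^σ_i`). -/
noncomputable def stepDist (M : MDP Q A) (σ : List (Q × A) → Q → A → ℝ)
    (d0 : Q → ℝ) (i : ℕ) (q : Q) : ℝ :=
  ∑ qs : Fin (i + 1) → Q, ∑ as : Fin i → A,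
    if qs (Fin.last i) = q then M.pathProb σ d0 i qs as else 0

/-- The probability mass that a (sub)distribution assigns to a set `T`. -/
noncomputable def mass (d : Q → ℝ) (T : Set Q) : ℝ := ∑ q, T.indicator d q

/-- The support of a (sub)distribution. -/
def supp {α : Type} (d : α → ℝ) : Set α := {q | 0 < d q}

/-- One-step sure predecessors of `Y`. -/
def Pre (M : MDP Q A) (Y : Set Q) : Set Q :=
  {q | ∃ a, ∀ q', 0 < M.δ q a q' → q' ∈ Y}

/-- Probability of reaching `T` within `i` steps. -/
noncomputable def reachProb (M : MDP Q A) (σ : List (Q × A) → Q → A → ℝ)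
    (d0 : Q → ℝ) (T : Set Q) (i : ℕ) : ℝ :=
  ∑ qs : Fin (i + 1) → Q, ∑ as : Fin i → A,
    if ∃ j, qs j ∈ T then M.pathProb σ d0 i qs as else 0

/-- `d0` is almost-sure winning for the reachability objective `◇T`:
some strategy reaches `T` with probability one. -/
def ASReach (M : MDP Q A) (d0 : Q → ℝ) (T : Set Q) : Prop :=
  ∃ σ, IsStrategy σ ∧ (⨆ i : ℕ, M.reachProb σ d0 T i) = 1

/-- `d0` is limit-sure eventually synchronizing in `T`. -/
def LimitSureEventually (M : MDP Q A) (d0 : Q → ℝ) (T : Set Q) : Prop :=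
  ∀ ε > (0 : ℝ), ∃ σ, IsStrategy σ ∧ ∃ i, 1 - ε ≤ mass (M.stepDist σ d0 i) T

/-- `d0` is almost-sure weakly synchronizing in `T`. -/
def ASWeakly (M : MDP Q A) (d0 : Q → ℝ) (T : Set Q) : Prop :=
  ∃ σ, IsStrategy σ ∧ ∀ ε > (0 : ℝ), {i : ℕ | 1 - ε ≤ mass (M.stepDist σ d0 i) T}.Infinite

/-- `d0` is almost-sure strongly synchronizing in `T`. -/
def ASStrongly (M : MDP Q A) (d0 : Q → ℝ) (T : Set Q) : Prop :=
  ∃ σ, IsStrategy σ ∧ ∀ ε > (0 : ℝ), ∃ N, ∀ i ≥ N, 1 - ε ≤ mass (M.stepDist σ d0 i) T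

/-- The uniform distribution on a set `S`. -/
noncomputable def uniformOn (S : Set Q) : Q → ℝ :=
  fun q => if q ∈ S then 1 / (S.ncard : ℝ) else 0

/-- The uniform strategy, playing all actions uniformly at random. -/
noncomputable def uniformStrategy (Q A : Type) [Fintype A] :
    List (Q × A) → Q → A → ℝ :=
  fun _ _ _ => 1 / (Fintype.card A : ℝ)

/-- Action `a` is allowed in `q` w.r.t. `S` if all its successors stay in `S`. -/
def Allowed (M : MDP Q A) (S : Set Q) (q : Q) (a : A) : Prop :=
  ∀ q', 0 < M.δ q a q' → q' ∈ S

/-- Edge relation within `S` given the allowed actions. -/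
def ECEdge (M : MDP Q A) (S : Set Q) (q q' : Q) : Prop :=
  q ∈ S ∧ q' ∈ S ∧ ∃ a, M.Allowed S q a ∧ 0 < M.δ q a q'

/-- `S` is an end-component: closed and strongly connected via allowed actions. -/
def IsEC (M : MDP Q A) (S : Set Q) : Prop :=
  (∀ q ∈ S, ∃ a, M.Allowed S q a) ∧
  ∀ q ∈ S, ∀ q' ∈ S, Relation.ReflTransGen (M.ECEdge S) q q'

/-- The union of all end-components. -/
def ECUnion (M : MDP Q A) : Set Q := ⋃₀ {S | M.IsEC S}

/-- Positive always synchronizing in `T`. -/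
def PosAlways (M : MDP Q A) (d0 : Q → ℝ) (T : Set Q) : Prop :=
  ∃ σ, IsStrategy σ ∧ ∀ i, 0 < mass (M.stepDist σ d0 i) T

/-- Positive eventually synchronizing in `T`. -/
def PosEvent (M : MDP Q A) (d0 : Q → ℝ) (T : Set Q) : Prop :=
  ∃ σ, IsStrategy σ ∧ ∃ i, 0 < mass (M.stepDist σ d0 i) T

/-- Positive weakly synchronizing in `T`. -/
def PosWeakly (M : MDP Q A) (d0 : Q → ℝ) (T : Set Q) : Prop :=
  ∃ σ, IsStrategy σ ∧ ∀ N, ∃ i ≥ N, 0 < mass (M.stepDist σ d0 i) T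

/-- Positive strongly synchronizing in `T`. -/
def PosStrongly (M : MDP Q A) (d0 : Q → ℝ) (T : Set Q) : Prop :=
  ∃ σ, IsStrategy σ ∧ ∃ N, ∀ i ≥ N, 0 < mass (M.stepDist σ d0 i) T

/-- Bounded always synchronizing in `T`. -/
def BndAlways (M : MDP Q A) (d0 : Q → ℝ) (T : Set Q) : Prop :=
  ∃ σ, IsStrategy σ ∧ ∃ ε > (0 : ℝ), ∀ i, ε < mass (M.stepDist σ d0 i) T

/-- Bounded eventually synchronizing in `T`. -/
def BndEvent (M : MDP Q A) (d0 : Q → ℝ) (T : Set Q) : Prop :=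
  ∃ σ, IsStrategy σ ∧ ∃ ε > (0 : ℝ), ∃ i, ε < mass (M.stepDist σ d0 i) T

/-- Bounded weakly synchronizing in `T`. -/
def BndWeakly (M : MDP Q A) (d0 : Q → ℝ) (T : Set Q) : Prop :=
  ∃ σ, IsStrategy σ ∧ ∃ ε > (0 : ℝ), ∀ N, ∃ i ≥ N, ε < mass (M.stepDist σ d0 i) T

/-- Bounded strongly synchronizing in `T`. -/
def BndStrongly (M : MDP Q A) (d0 : Q → ℝ) (T : Set Q) : Prop :=
  ∃ σ, IsStrategy σ ∧ ∃ ε > (0 : ℝ), ∃ N, ∀ i ≥ N, ε < mass (M.stepDist σ d0 i) T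

end MDP

namespace MCaux
open MDP
set_option linter.unusedSectionVars false
set_option maxHeartbeats 2000000

section Paths
variable {Q : Type} [Fintype Q] (r : Q → Q → Prop)

def pathN : ℕ → Q → Q → Prop
  | 0, a, b => a = b
  | (ℓ+1), a, b => ∃ c, r a c ∧ pathN ℓ c b

theorem pathN_of_rtg {a b : Q} (h : Relation.ReflTransGen r a b) :
    ∃ ℓ, pathN r ℓ a b := by
  induction h with
  | refl => exact ⟨0, rfl⟩
  | tail _ hbc ih => ?_
  obtain ⟨ℓ, hp⟩ := ih
  refine ⟨ℓ + 1, ?_⟩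
  clear * - hp hbc
  induction ℓ generalizing a with
  | zero => exact ⟨_, hp ▸ hbc, rfl⟩
  | succ n ih => obtain ⟨c, hac, hcb⟩ := hp; exact ⟨c, hac, ih hcb⟩

theorem pathN_fun {ℓ : ℕ} {a b : Q} (h : pathN r ℓ a b) :
    ∃ f : ℕ → Q, f 0 = a ∧ f ℓ = b ∧ ∀ j < ℓ, r (f j) (f (j+1)) := by
  induction ℓ generalizing a with
  | zero => exact ⟨fun _ => a, rfl, h ▸ rfl, by omega⟩
  | succ n ih =>
    obtain ⟨c, hac, hcb⟩ := h
    obtain ⟨f, hf0, hfn, hfe⟩ := ih hcb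
    refine ⟨fun t => if t = 0 then a else f (t-1), by simp, by simp [hfn], ?_⟩
    intro j hj
    rcases Nat.eq_zero_or_pos j with h0 | h0
    · subst h0; simpa [hf0] using hac
    · have : j - 1 < n := by omega
      have := hfe (j-1) this
      simp only [if_neg (by omega : ¬ j = 0), if_neg (by omega : ¬ j + 1 = 0)]
      have e : j - 1 + 1 = j := by omega
      rwa [e] at this

theorem pathN_of_fun {ℓ : ℕ} {f : ℕ → Q} (hfe : ∀ j < ℓ, r (f j) (f (j+1))) :
    pathN r ℓ (f 0) (f ℓ) := by
  induction ℓ generalizing f with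
  | zero => rfl
  | succ n ih =>
    exact ⟨f 1, hfe 0 (by omega), ih (f := fun t => f (t+1)) (fun j hj => hfe (j+1) (by omega))⟩

theorem pathN_shorten {ℓ : ℕ} {a b : Q} (h : pathN r ℓ a b) :
    ∃ ℓ' < Fintype.card Q, pathN r ℓ' a b := by
  induction ℓ using Nat.strong_induction_on generalizing a with
  | _ ℓ IH => ?_
  by_cases hlt : ℓ < Fintype.card Q
  · exact ⟨ℓ, hlt, h⟩
  obtain ⟨f, hf0, hfl, hfe⟩ := pathN_fun r h
  have hcard : Fintype.card Q < Fintype.card (Fin (ℓ+1)) := by simp; omega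
  obtain ⟨j1, j2, hne, heq⟩ := Fintype.exists_ne_map_eq_of_card_lt
    (fun j : Fin (ℓ+1) => f j) hcard
  wlog hlt12 : (j1 : ℕ) < (j2 : ℕ) generalizing j1 j2
  · have hne' : (j1 : ℕ) ≠ (j2 : ℕ) := fun h' => hne (Fin.ext h')
    exact this j2 j1 hne.symm heq.symm (by omega)
  · set d := (j2 : ℕ) - (j1 : ℕ) with hd
    have hd1 : 1 ≤ d := by omega
    have hj2 : (j2 : ℕ) ≤ ℓ := by omega
    set g : ℕ → Q := fun t => if t ≤ (j1 : ℕ) then f t else f (t + d) with hg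
    have hg0 : g 0 = a := by simp [hg, hf0]
    have hgl : g (ℓ - d) = b := by
      by_cases hc : ℓ - d ≤ (j1 : ℕ)
      · have : ℓ - d = (j1 : ℕ) := by omega
        simp only [hg, this, if_pos le_rfl]
        have : (j1 : ℕ) = ℓ ∨ (j2 : ℕ) = ℓ := by omega
        rcases this with h' | h'
        · rw [h', hfl]
        · rw [heq, h', hfl]
      · simp only [hg, if_neg hc]
        have : ℓ - d + d = ℓ := by omega
        rw [this, hfl]
    have hge : ∀ j < ℓ - d, r (g j) (g (j+1)) := by
      intro j hj
      by_cases h1 : j + 1 ≤ (j1 : ℕ)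
      · simp only [hg, if_pos h1, if_pos (by omega : j ≤ (j1:ℕ))]
        exact hfe j (by omega)
      by_cases h2 : j ≤ (j1 : ℕ)
      · have hjj : j = (j1 : ℕ) := by omega
        have e : j + 1 + d = (j2 : ℕ) + 1 := by omega
        simp only [hg, if_pos h2, if_neg h1]
        rw [e, hjj, heq]
        exact hfe j2 (by omega)
      · simp only [hg, if_neg h2, if_neg h1]
        have e : j + 1 + d = j + d + 1 := by omega
        rw [e]
        exact hfe (j + d) (by omega)
    have hpg : pathN r (ℓ - d) a b := by
      have := pathN_of_fun r hge
      rwa [hg0, hgl] at this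
    exact IH (ℓ - d) (by omega) hpg

end Paths

section Evolve
variable {Q : Type} [Fintype Q]

noncomputable def evolve (P : Q → Q → ℝ) (d : Q → ℝ) : ℕ → Q → ℝ
  | 0 => d
  | (i+1) => fun q => ∑ q', evolve P d i q' * P q' q

variable (P : Q → Q → ℝ) (hP0 : ∀ q q', 0 ≤ P q q') (hP1 : ∀ q, ∑ q', P q q' = 1)
variable (d : Q → ℝ) (hd0 : ∀ q, 0 ≤ d q)
include hP0 hP1 hd0

theorem evolve_nonneg : ∀ i q, 0 ≤ evolve P d i q := by
  intro i
  induction i with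
  | zero => exact hd0
  | succ n ih => exact fun q => Finset.sum_nonneg fun q' _ => mul_nonneg (ih q') (hP0 q' q)

theorem evolve_total : ∀ i, ∑ q, evolve P d i q = ∑ q, d q := by
  intro i
  induction i with
  | zero => rfl
  | succ n ih =>
    calc ∑ q, evolve P d (n+1) q = ∑ q, ∑ q', evolve P d n q' * P q' q := rfl
    _ = ∑ q', ∑ q, evolve P d n q' * P q' q := Finset.sum_comm
    _ = ∑ q', evolve P d n q' * ∑ q, P q' q := by simp [Finset.mul_sum]
    _ = ∑ q', evolve P d n q' := by simp [hP1]
    _ = ∑ q, d q := ih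

theorem evolve_add (i j : ℕ) (q' : Q) :
    evolve P d (i + j) q' =
      ∑ q, evolve P d i q * evolve P (fun x => if x = q then 1 else 0) j q' := by
  induction j generalizing q' with
  | zero =>
    simp only [Nat.add_zero]
    show evolve P d i q' = ∑ q, evolve P d i q * if q' = q then (1:ℝ) else 0
    simp
  | succ n ih =>
    show ∑ q'', evolve P d (i + n) q'' * P q'' q' = _
    calc ∑ q'', evolve P d (i + n) q'' * P q'' q'
        = ∑ q'', (∑ q, evolve P d i q * evolve P (fun x => if x = q then 1 else 0) n q'') * P q'' q' := by
          simp only [ih]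
      _ = ∑ q'', ∑ q, evolve P d i q * evolve P (fun x => if x = q then 1 else 0) n q'' * P q'' q' := by
          simp [Finset.sum_mul]
      _ = ∑ q, ∑ q'', evolve P d i q * (evolve P (fun x => if x = q then 1 else 0) n q'' * P q'' q') := by
          rw [Finset.sum_comm]; simp [mul_assoc]
      _ = ∑ q, evolve P d i q * ∑ q'', evolve P (fun x => if x = q then 1 else 0) n q'' * P q'' q' := by
          simp [Finset.mul_sum]
      _ = _ := rfl

theorem evolve_step_ge {α : ℝ} (hα : ∀ {a b}, 0 < P a b → α ≤ P a b)
    {q1 q2 : Q} (h12 : 0 < P q1 q2) (i : ℕ) :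
    evolve P d i q1 * α ≤ evolve P d (i+1) q2 := by
  have h1 : evolve P d i q1 * α ≤ evolve P d i q1 * P q1 q2 := by
    exact mul_le_mul_of_nonneg_left (hα h12) (evolve_nonneg P hP0 hP1 d hd0 i q1)
  refine h1.trans ?_
  exact Finset.single_le_sum (f := fun q' => evolve P d i q' * P q' q2)
    (fun q' _ => mul_nonneg (evolve_nonneg P hP0 hP1 d hd0 i q') (hP0 q' q2)) (Finset.mem_univ q1)

theorem evolve_path_ge {α : ℝ} (hα : ∀ {a b}, 0 < P a b → α ≤ P a b) (hα0 : 0 ≤ α)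
    {ℓ : ℕ} {q1 q2 : Q} (hp : pathN (fun a b => 0 < P a b) ℓ q1 q2) (i : ℕ) :
    evolve P d i q1 * α ^ ℓ ≤ evolve P d (i + ℓ) q2 := by
  induction ℓ generalizing q1 i with
  | zero => subst hp; simp
  | succ n ih =>
    obtain ⟨c, hqc, hcb⟩ := hp
    have h1 := evolve_step_ge P hP0 hP1 d hd0 hα hqc i
    have h2 := ih hcb (i+1)
    have e1 : evolve P d i q1 * α ^ (n+1) = (evolve P d i q1 * α) * α ^ n := by ring
    rw [e1]
    have e : i + (n + 1) = (i + 1) + n := by omega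
    rw [e]
    calc (evolve P d i q1 * α) * α ^ n ≤ evolve P d (i+1) c * α ^ n :=
          mul_le_mul_of_nonneg_right h1 (pow_nonneg hα0 n)
      _ ≤ _ := h2

theorem evolve_closed_mono {s : Finset Q} (hs : ∀ c ∈ s, ∀ q', 0 < P c q' → q' ∈ s) (i : ℕ) :
    ∑ c ∈ s, evolve P d i c ≤ ∑ c ∈ s, evolve P d (i+1) c := by
  have key : ∀ q' ∈ s, ∑ c ∈ s, P q' c = 1 := by
    intro q' hq'
    rw [← hP1 q']
    refine Finset.sum_subset (Finset.subset_univ s) ?_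
    intro c _ hc
    by_contra hne
    have : 0 < P q' c := lt_of_le_of_ne (hP0 q' c) (Ne.symm hne)
    exact hc (hs q' hq' c this)
  calc ∑ c ∈ s, evolve P d i c = ∑ q' ∈ s, evolve P d i q' * ∑ c ∈ s, P q' c := by
        refine Finset.sum_congr rfl fun q' hq' => ?_
        rw [key q' hq', mul_one]
    _ = ∑ q' ∈ s, ∑ c ∈ s, evolve P d i q' * P q' c := by simp [Finset.mul_sum]
    _ = ∑ c ∈ s, ∑ q' ∈ s, evolve P d i q' * P q' c := Finset.sum_comm
    _ ≤ ∑ c ∈ s, ∑ q', evolve P d i q' * P q' c := by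
        refine Finset.sum_le_sum fun c _ => ?_
        refine Finset.sum_le_sum_of_subset_of_nonneg (Finset.subset_univ s) ?_
        exact fun q' _ _ => mul_nonneg (evolve_nonneg P hP0 hP1 d hd0 i q') (hP0 q' c)
    _ = ∑ c ∈ s, evolve P d (i+1) c := rfl

theorem evolve_closed_mono' {s : Finset Q} (hs : ∀ c ∈ s, ∀ q', 0 < P c q' → q' ∈ s)
    {i j : ℕ} (hij : i ≤ j) :
    ∑ c ∈ s, evolve P d i c ≤ ∑ c ∈ s, evolve P d j c := by
  induction j with
  | zero => simp_all
  | succ n ih =>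
    rcases Nat.lt_or_ge i (n+1) with h | h
    · exact (ih (by omega)).trans (evolve_closed_mono P hP0 hP1 d hd0 hs n)
    · have : i = n + 1 := by omega
      subst this; rfl

theorem evolve_supp {R : Set Q} (hR : ∀ q ∈ R, ∀ q', 0 < P q q' → q' ∈ R)
    (hdR : ∀ q, 0 < d q → q ∈ R) : ∀ i q, 0 < evolve P d i q → q ∈ R := by
  intro i
  induction i with
  | zero => exact hdR
  | succ n ih =>
    intro q hq
    have hex : ∃ q' ∈ Finset.univ, 0 < evolve P d n q' * P q' q := by
      by_contra hc
      push_neg at hc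
      have : ∑ q', evolve P d n q' * P q' q = 0 := by
        refine le_antisymm (Finset.sum_nonpos fun q' _ => hc q' (Finset.mem_univ q')) ?_
        exact Finset.sum_nonneg fun q' _ => mul_nonneg (evolve_nonneg P hP0 hP1 d hd0 n q') (hP0 q' q)
      exact absurd this (by simpa [evolve] using hq.ne')
    obtain ⟨q', _, hq'⟩ := hex
    have h1 : 0 < evolve P d n q' := by
      rcases lt_or_ge 0 (evolve P d n q') with h | h
      · exact h
      · nlinarith [hP0 q' q]
    have h2 : 0 < P q' q := by nlinarith [evolve_nonneg P hP0 hP1 d hd0 n q']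
    exact hR q' (ih q' h1) q h2

end Evolve

section Bridge
variable {Q : Type} [Fintype Q]

noncomputable def F (M : MDP Q Unit) (d : Q → ℝ) (i : ℕ) (q : Q) : ℝ :=
  ∑ qs : Fin (i + 1) → Q,
    if qs (Fin.last i) = q then d (qs 0) * ∏ j : Fin i, M.δ (qs j.castSucc) () (qs j.succ)
    else 0

theorem stepDist_eq_F (M : MDP Q Unit) (d : Q → ℝ) (i : ℕ) (q : Q) :
    M.stepDist (fun _ _ _ => (1:ℝ)) d i q = F M d i q := by
  unfold stepDist F
  refine Finset.sum_congr rfl fun qs _ => ?_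
  rw [Fintype.sum_unique]
  congr 1
  unfold pathProb
  simp

theorem F_zero (M : MDP Q Unit) (d : Q → ℝ) (q : Q) : F M d 0 q = d q := by
  unfold F
  rw [← Equiv.sum_comp (Equiv.funUnique (Fin 1) Q).symm]
  simp [Equiv.funUnique]

theorem F_succ (M : MDP Q Unit) (d : Q → ℝ) (i : ℕ) (q : Q) :
    F M d (i+1) q = F M (fun y => ∑ x, d x * M.δ x () y) i q := by
  unfold F
  rw [← Equiv.sum_comp (Fin.consEquiv (fun _ : Fin (i+2) => Q))]
  rw [Fintype.sum_prod_type]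
  rw [Finset.sum_comm]
  refine Finset.sum_congr rfl fun f _ => ?_
  have hlast : ∀ x : Q, (Fin.consEquiv (fun _ : Fin (i+2) => Q)) (x, f) (Fin.last (i+1)) = f (Fin.last i) := by
    intro x
    rw [Fin.consEquiv_apply, ← Fin.succ_last]
    exact Fin.cons_succ _ _ _
  by_cases hq : f (Fin.last i) = q
  · simp only [Fin.consEquiv_apply, hlast, hq, if_pos rfl, if_pos]
    rw [Finset.sum_mul]
    refine Finset.sum_congr rfl fun x _ => ?_
    rw [Fin.prod_univ_succ]
    have h0 : Fin.cons (α := fun _ : Fin (i+2) => Q) x f ((0 : Fin (i+1)).castSucc) = x := by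
      rw [Fin.castSucc_zero, Fin.cons_zero]
    have h1 : Fin.cons (α := fun _ : Fin (i+2) => Q) x f ((0 : Fin (i+1)).succ) = f 0 := by
      rw [Fin.cons_succ]
    rw [h0, h1]
    have hprod : ∀ j : Fin i,
        M.δ (Fin.cons (α := fun _ : Fin (i+2) => Q) x f (j.succ.castSucc)) ()
            (Fin.cons (α := fun _ : Fin (i+2) => Q) x f (j.succ.succ))
          = M.δ (f j.castSucc) () (f j.succ) := by
      intro j
      rw [← Fin.succ_castSucc, Fin.cons_succ, Fin.cons_succ]
    rw [Finset.prod_congr rfl (fun j _ => hprod j)]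
    rw [show (Fin.cons (α := fun _ : Fin (i+2) => Q) x f 0) = x from Fin.cons_zero _ _]
    ring
  · simp only [Fin.consEquiv_apply, hlast, hq, if_neg, if_false]
    simp

theorem evolve_shift (P : Q → Q → ℝ) (d : Q → ℝ) (i : ℕ) (q : Q) :
    evolve P d (i+1) q = evolve P (fun y => ∑ x, d x * P x y) i q := by
  induction i generalizing q with
  | zero => rfl
  | succ n ih =>
    show ∑ q', evolve P d (n+1) q' * P q' q = _
    refine Eq.trans (Finset.sum_congr rfl fun q' _ => by rw [ih]) rfl

theorem stepDist_eq (M : MDP Q Unit) (d : Q → ℝ) (i : ℕ) (q : Q) :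
    M.stepDist (fun _ _ _ => (1:ℝ)) d i q = evolve (fun a b => M.δ a () b) d i q := by
  induction i generalizing d q with
  | zero => rw [stepDist_eq_F, F_zero]; rfl
  | succ n ih =>
    rw [stepDist_eq_F, F_succ, ← stepDist_eq_F, ih, evolve_shift]

end Bridge

section EC
variable {Q : Type} [Fintype Q] (M : MDP Q Unit)

theorem ec_closed {S : Set Q} (hS : M.IsEC S) :
    ∀ c ∈ S, ∀ q', 0 < M.δ c () q' → q' ∈ S := by
  intro c hc q' hq'
  obtain ⟨a, ha⟩ := hS.1 c hc
  cases a
  exact ha q' hq'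

theorem ecUnion_closed : ∀ c ∈ M.ECUnion, ∀ q', 0 < M.δ c () q' → q' ∈ M.ECUnion := by
  intro c hc q' hq'
  obtain ⟨S, hS, hcS⟩ := hc
  exact ⟨S, hS, ec_closed M hS c hcS q' hq'⟩

theorem rtg_lift {S : Set Q} (hcl : ∀ c ∈ S, ∀ q', 0 < M.δ c () q' → q' ∈ S)
    {c c' : Q} (hc : c ∈ S) (h : Relation.ReflTransGen (fun a b => 0 < M.δ a () b) c c') :
    c' ∈ S ∧ Relation.ReflTransGen (M.ECEdge S) c c' := by
  induction h with
  | refl => exact ⟨hc, .refl⟩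
  | tail hab hbc ih =>
    obtain ⟨hbS, hrtg⟩ := ih
    have hc'S := hcl _ hbS _ hbc
    refine ⟨hc'S, hrtg.tail ?_⟩
    exact ⟨hbS, hc'S, (), fun q' hq' => hcl _ hbS _ hq', hbc⟩

theorem rtg_of_ecedge {S : Set Q} {c c' : Q}
    (h : Relation.ReflTransGen (M.ECEdge S) c c') :
    Relation.ReflTransGen (fun a b => 0 < M.δ a () b) c c' := by
  refine Relation.ReflTransGen.mono ?_ c c' h
  rintro a b ⟨-, -, u, -, hpos⟩
  cases u
  exact hpos

/-- every state can reach the union of end components -/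
theorem reach_EC (q : Q) :
    ∃ e ∈ M.ECUnion, Relation.ReflTransGen (fun a b => 0 < M.δ a () b) q e := by
  classical
  set edge : Q → Q → Prop := fun a b => 0 < M.δ a () b with hedge
  set Fr : Q → Finset Q := fun x => Finset.univ.filter (fun y => Relation.ReflTransGen edge x y) with hFr
  have hmemF : ∀ x y, y ∈ Fr x ↔ Relation.ReflTransGen edge x y := by
    intro x y; simp [hFr]
  have hqq : q ∈ Fr q := (hmemF q q).2 .refl
  obtain ⟨m, hmF, hmin⟩ := Finset.exists_min_image (Fr q) (fun x => (Fr x).card) ⟨q, hqq⟩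
  have hqm : Relation.ReflTransGen edge q m := (hmemF q m).1 hmF
  set S : Set Q := ↑(Fr m) with hSdef
  have hmS : m ∈ S := by exact_mod_cast (hmemF m m).2 .refl
  have hclosed : ∀ c ∈ S, ∀ q', 0 < M.δ c () q' → q' ∈ S := by
    intro c hc q' hq'
    have : Relation.ReflTransGen edge m c := (hmemF m c).1 (by exact_mod_cast hc)
    exact_mod_cast (hmemF m q').2 (this.tail hq')
  have hFc : ∀ c ∈ S, Fr c = Fr m := by
    intro c hc
    have hmc : Relation.ReflTransGen edge m c := (hmemF m c).1 (by exact_mod_cast hc)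
    have hsub : Fr c ⊆ Fr m := by
      intro y hy
      exact (hmemF m y).2 (hmc.trans ((hmemF c y).1 hy))
    have hcq : c ∈ Fr q := (hmemF q c).2 (hqm.trans hmc)
    exact Finset.eq_of_subset_of_card_le hsub (hmin c hcq)
  have hEC : M.IsEC S := by
    constructor
    · intro c hc
      exact ⟨(), fun q' hq' => hclosed c hc q' hq'⟩
    · intro c hc c' hc'
      have : Relation.ReflTransGen edge c c' := by
        have h1 : c' ∈ Fr c := by rw [hFc c hc]; exact_mod_cast hc'
        exact (hmemF c c').1 h1
      exact (rtg_lift M hclosed hc this).2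
  exact ⟨m, ⟨S, hEC, hmS⟩, hqm⟩

end EC

section MassAux
variable {Q : Type} [Fintype Q]

theorem mass_eq_filter (d : Q → ℝ) (T : Set Q) :
    mass d T = ∑ q ∈ Finset.univ.filter (· ∈ T), d q := by
  unfold mass
  rw [Finset.sum_filter]
  refine Finset.sum_congr rfl fun q _ => ?_
  simp [Set.indicator_apply]

theorem single_le_mass (d : Q → ℝ) (hd : ∀ q, 0 ≤ d q) {T : Set Q} {q : Q} (hq : q ∈ T) :
    d q ≤ mass d T := by
  rw [mass_eq_filter]
  exact Finset.single_le_sum (fun q' _ => hd q') (by simp [hq])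

theorem infinite_of_unbounded {s : Set ℕ} (h : ∀ N, ∃ i, N ≤ i ∧ i ∈ s) : s.Infinite := by
  intro hfin
  obtain ⟨b, hb⟩ := hfin.bddAbove
  obtain ⟨i, hi, his⟩ := h (b+1)
  exact absurd (hb his) (by omega)

theorem exists_ge_div {s : Finset Q} {q : Q} (hq : q ∈ s) (f : Q → ℝ)
    {m0 : ℝ} (hm0 : 0 ≤ m0) (hm : m0 ≤ ∑ x ∈ s, f x) :
    ∃ x ∈ s, m0 / (Fintype.card Q : ℝ) ≤ f x := by
  by_contra hc
  push_neg at hc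
  have hn : (0:ℝ) < (Fintype.card Q : ℝ) := by
    have : 0 < Fintype.card Q := Fintype.card_pos_iff.2 ⟨q⟩
    exact_mod_cast this
  have hlt : ∑ x ∈ s, f x < ∑ x ∈ s, m0 / (Fintype.card Q : ℝ) :=
    Finset.sum_lt_sum_of_nonempty ⟨q, hq⟩ (fun x hx => hc x hx)
  have hsum : ∑ x ∈ s, m0 / (Fintype.card Q : ℝ) = s.card * (m0 / (Fintype.card Q : ℝ)) := by
    rw [Finset.sum_const, nsmul_eq_mul]
  have hcard : (s.card : ℝ) ≤ (Fintype.card Q : ℝ) := by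
    exact_mod_cast Finset.card_le_univ s
  have : ∑ x ∈ s, f x < m0 := by
    rw [hsum] at hlt
    calc ∑ x ∈ s, f x < s.card * (m0 / (Fintype.card Q : ℝ)) := hlt
      _ ≤ (Fintype.card Q : ℝ) * (m0 / (Fintype.card Q : ℝ)) :=
          mul_le_mul_of_nonneg_right hcard (div_nonneg hm0 hn.le)
      _ = m0 := by field_simp
  linarith

end MassAux

end MCaux

namespace MCaux
open MDP

section Main
variable {Q : Type} [Fintype Q]

theorem alpha_le_one (M : MDP Q Unit) {α : ℝ}
    (hα : IsLeast {x : ℝ | 0 < x ∧ ∃ q a q', M.δ q a q' = x} α) : α ≤ 1 := by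
  obtain ⟨⟨hpos, qa, a, qb, he⟩, _⟩ := hα
  rw [← he, ← M.δ_sum qa a]
  exact Finset.single_le_sum (fun c _ => M.δ_nonneg qa a c) (Finset.mem_univ qb)

theorem alpha_half (M : MDP Q Unit) {α : ℝ}
    (hα : IsLeast {x : ℝ | 0 < x ∧ ∃ q a q', M.δ q a q' = x} α) (hone : α ≠ 1) :
    α ≤ 1/2 := by
  obtain ⟨⟨hpos, qa, a, qb, he⟩, hlb⟩ := hα
  have hlt1 : α < 1 := lt_of_le_of_ne (alpha_le_one M ⟨⟨hpos, qa, a, qb, he⟩, hlb⟩) hone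
  have hex : ∃ qc, qc ≠ qb ∧ 0 < M.δ qa a qc := by
    by_contra hc
    push_neg at hc
    have hsum : ∑ q', M.δ qa a q' = M.δ qa a qb := by
      refine Finset.sum_eq_single_of_mem qb (Finset.mem_univ qb) ?_
      intro c _ hne
      have h1 := hc c hne
      have h2 := M.δ_nonneg qa a c
      linarith
    rw [M.δ_sum, he] at hsum
    linarith
  obtain ⟨qc, hne, hqc⟩ := hex
  have h1 : α ≤ M.δ qa a qc := hlb ⟨hqc, qa, a, qc, rfl⟩
  have hsum : M.δ qa a qb + M.δ qa a qc ≤ 1 := by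
    rw [← M.δ_sum qa a]
    rw [show M.δ qa a qb + M.δ qa a qc = ∑ x ∈ ({qb, qc} : Finset Q), M.δ qa a x from
      (Finset.sum_pair (Ne.symm hne)).symm]
    exact Finset.sum_le_sum_of_subset_of_nonneg (Finset.subset_univ _)
      (fun c _ _ => M.δ_nonneg qa a c)
  rw [he] at hsum
  linarith

theorem main2 (M : MDP Q Unit) (d0 : Q → ℝ) (hd0 : IsDist d0)
    (T : Set Q) (α α0 : ℝ)
    (hα : IsLeast {x : ℝ | 0 < x ∧ ∃ q a q', M.δ q a q' = x} α)
    (hα0 : IsLeast {x : ℝ | 0 < x ∧ ∃ q, d0 q = x} α0)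
    (h : ∃ q0 ∈ supp d0, ∃ q ∈ T ∩ M.ECUnion,
        Relation.ReflTransGen (fun x y => 0 < M.δ x () y) q0 q) :
    {i : ℕ | α0 * α ^ (Fintype.card Q + Fintype.card Q ^ 2) ≤
        mass (evolve (fun a b => M.δ a () b) d0 i) T}.Infinite := by
  obtain ⟨q0, hq0, q, ⟨hqT, hqE⟩, hreach⟩ := h
  set P : Q → Q → ℝ := fun a b => M.δ a () b with hPdef
  have hP0 : ∀ a b, 0 ≤ P a b := fun a b => M.δ_nonneg a () b
  have hP1 : ∀ a, ∑ b, P a b = 1 := fun a => M.δ_sum a ()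
  have hd0n : ∀ x, 0 ≤ d0 x := hd0.1
  have hαpos : 0 < α := hα.1.1
  have hα_lb : ∀ {a b : Q}, 0 < P a b → α ≤ P a b := fun {a b} hab => hα.2 ⟨hab, a, (), b, rfl⟩
  have hα1 : α ≤ 1 := alpha_le_one M hα
  have hα0pos : 0 < α0 := hα0.1.1
  have hα0_lb : α0 ≤ d0 q0 := hα0.2 ⟨hq0, q0, rfl⟩
  set n := Fintype.card Q with hndef
  have hn1 : 1 ≤ n := Fintype.card_pos_iff.2 ⟨q⟩
  obtain ⟨S, hSEC, hqS⟩ := hqE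
  have hScl : ∀ c ∈ S, ∀ q', 0 < P c q' → q' ∈ S := ec_closed M hSEC
  obtain ⟨ℓ0, hp0⟩ := pathN_of_rtg _ hreach
  obtain ⟨k, hkn, hpk⟩ := pathN_shorten _ hp0
  have hstart : α0 * α ^ (n-1) ≤ evolve P d0 k q := by
    have h1 := evolve_path_ge P hP0 hP1 d0 hd0n hα_lb hαpos.le hpk 0
    rw [Nat.zero_add] at h1
    calc α0 * α^(n-1) ≤ d0 q0 * α^k := by
          refine mul_le_mul hα0_lb (pow_le_pow_of_le_one hαpos.le hα1 (by omega))
            (pow_nonneg hαpos.le _) (hd0n q0)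
      _ ≤ evolve P d0 k q := h1
  set sFin : Finset Q := Finset.univ.filter (· ∈ S) with hsFin
  have hqsFin : q ∈ sFin := by simp [hsFin, hqS]
  have hsCl : ∀ c ∈ sFin, ∀ q', 0 < P c q' → q' ∈ sFin := by
    intro c hc q' hq'
    simp only [hsFin, Finset.mem_filter, Finset.mem_univ, true_and] at hc ⊢
    exact hScl c hc q' hq'
  have hmassS : ∀ i, k ≤ i → α0 * α^(n-1) ≤ ∑ c ∈ sFin, evolve P d0 i c := by
    intro i hi
    calc α0 * α^(n-1) ≤ evolve P d0 k q := hstart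
      _ ≤ ∑ c ∈ sFin, evolve P d0 k c :=
          Finset.single_le_sum (fun c _ => evolve_nonneg P hP0 hP1 d0 hd0n k c) hqsFin
      _ ≤ ∑ c ∈ sFin, evolve P d0 i c := evolve_closed_mono' P hP0 hP1 d0 hd0n hsCl hi
  by_cases hone : α = 1
  · -- deterministic-ish case
    have hex1 : ∃ q1, 0 < P q q1 := by
      by_contra hc
      push_neg at hc
      have : ∑ b, P q b = 0 :=
        le_antisymm (Finset.sum_nonpos fun b _ => hc b) (Finset.sum_nonneg fun b _ => hP0 q b)
      rw [hP1 q] at this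
      linarith
    obtain ⟨q1, hq1pos⟩ := hex1
    have hq1S : q1 ∈ S := hScl q hqS q1 hq1pos
    have hrtg1 : Relation.ReflTransGen (fun a b => 0 < P a b) q1 q :=
      rtg_of_ecedge M (hSEC.2 q1 hq1S q hqS)
    obtain ⟨L', hpL'⟩ := pathN_of_rtg _ hrtg1
    have hcyc : pathN (fun a b => 0 < P a b) (L'+1) q q := ⟨q1, hq1pos, hpL'⟩
    have hiter : ∀ m : ℕ, α0 ≤ evolve P d0 (k + m*(L'+1)) q := by
      intro m
      induction m with
      | zero =>
        have := hstart
        rw [hone, one_pow, mul_one] at this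
        simpa using this
      | succ j ih =>
        have hstep := evolve_path_ge P hP0 hP1 d0 hd0n hα_lb hαpos.le hcyc (k + j*(L'+1))
        rw [hone, one_pow, mul_one] at hstep
        have e : k + j*(L'+1) + (L'+1) = k + (j+1)*(L'+1) := by ring
        rw [e] at hstep
        exact ih.trans hstep
    refine infinite_of_unbounded fun N => ?_
    have hNle : N ≤ k + N*(L'+1) := by
      have : N ≤ N*(L'+1) := Nat.le_mul_of_pos_right N (by omega)
      omega
    refine ⟨k + N*(L'+1), hNle, ?_⟩
    show α0 * α ^ (n + n^2) ≤ mass (evolve P d0 (k + N*(L'+1))) T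
    rw [hone, one_pow, mul_one]
    exact (hiter N).trans (single_le_mass _ (evolve_nonneg P hP0 hP1 d0 hd0n _) hqT)
  · -- α ≤ 1/2 case
    have h2α : α ≤ 1/2 := alpha_half M hα hone
    have hnR : (0:ℝ) < (n:ℝ) := by exact_mod_cast hn1
    -- the key arithmetic inequality
    obtain ⟨t, ht⟩ : ∃ t, n^2 = t := ⟨_, rfl⟩
    have hnt : n ≤ t := by rw [← ht]; exact Nat.le_self_pow (by omega) n
    have h2t : 2*n ≤ t + 2 := by
      rcases Nat.lt_or_ge n 2 with hc|hc
      · omega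
      · rw [← ht]
        calc 2*n ≤ n*n := Nat.mul_le_mul_right n hc
          _ = n^2 := (sq n).symm
          _ ≤ n^2 + 2 := Nat.le_add_right _ _
    set m : ℕ := t - n + 2 with hmdef
    have hexp : n + n^2 = (n-1) + (n-1) + m := by rw [ht]; omega
    have hnm : n ≤ m := by omega
    have hn2m : (n:ℝ) ≤ 2^m := by
      have h1 : n < 2^n := Nat.lt_two_pow_self
      have h2 : (2:ℕ)^n ≤ 2^m := Nat.pow_le_pow_right (by omega) hnm
      exact_mod_cast (h1.le.trans h2)
    have hαm : α^m ≤ 1/(n:ℝ) := by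
      have h1 : α^m ≤ (1/2:ℝ)^m := pow_le_pow_left₀ hαpos.le h2α m
      have h2 : (n:ℝ) * (1/2:ℝ)^m ≤ 1 := by
        calc (n:ℝ) * (1/2:ℝ)^m ≤ (2:ℝ)^m * (1/2:ℝ)^m := by
              refine mul_le_mul_of_nonneg_right ?_ (by positivity)
              exact_mod_cast hn2m
          _ = 1 := by rw [← mul_pow]; norm_num
      rw [le_div_iff₀ hnR]
      nlinarith [pow_nonneg hαpos.le m]
    have key : α0 * α^(n+n^2) ≤ (α0 * α^(n-1) / (n:ℝ)) * α^(n-1) := by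
      have e1 : α0 * α^(n+n^2) = (α0 * α^(n-1) * α^(n-1)) * α^m := by
        rw [hexp, pow_add, pow_add]; ring
      rw [e1]
      calc (α0 * α^(n-1) * α^(n-1)) * α^m
          ≤ (α0 * α^(n-1) * α^(n-1)) * (1/(n:ℝ)) := by
            refine mul_le_mul_of_nonneg_left hαm (by positivity)
        _ = (α0 * α^(n-1) / (n:ℝ)) * α^(n-1) := by ring
    refine infinite_of_unbounded fun N => ?_
    set i := max N k with hidef
    obtain ⟨x, hxs, hx⟩ := exists_ge_div hqsFin (evolve P d0 i)
      (by positivity : (0:ℝ) ≤ α0 * α^(n-1)) (hmassS i (le_max_right N k))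
    have hxS : x ∈ S := by
      simpa [hsFin] using hxs
    have hrtgx : Relation.ReflTransGen (fun a b => 0 < P a b) x q :=
      rtg_of_ecedge M (hSEC.2 x hxS q hqS)
    obtain ⟨ℓ1, hp1⟩ := pathN_of_rtg _ hrtgx
    obtain ⟨ℓ, hℓn, hpℓ⟩ := pathN_shorten _ hp1
    have hstep := evolve_path_ge P hP0 hP1 d0 hd0n hα_lb hαpos.le hpℓ i
    refine ⟨i + ℓ, by omega, ?_⟩
    show α0 * α ^ (n + n^2) ≤ mass (evolve P d0 (i+ℓ)) T
    calc α0 * α^(n+n^2) ≤ (α0 * α^(n-1) / (n:ℝ)) * α^(n-1) := key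
      _ ≤ evolve P d0 i x * α^ℓ := by
          refine mul_le_mul hx (pow_le_pow_of_le_one hαpos.le hα1 (by omega))
            (pow_nonneg hαpos.le _) (evolve_nonneg P hP0 hP1 d0 hd0n i x)
      _ ≤ evolve P d0 (i+ℓ) q := hstep
      _ ≤ mass (evolve P d0 (i+ℓ)) T :=
          single_le_mass _ (evolve_nonneg P hP0 hP1 d0 hd0n _) hqT

end Main
end MCaux



namespace MCaux
open MDP

section Fwd
variable {Q : Type} [Fintype Q]

theorem forward (M : MDP Q Unit) (d0 : Q → ℝ) (hd0 : IsDist d0) (T : Set Q) (α : ℝ)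
    (hα : IsLeast {x : ℝ | 0 < x ∧ ∃ q a q', M.δ q a q' = x} α)
    (hno : ¬ ∃ q0 ∈ supp d0, ∃ q ∈ T ∩ M.ECUnion,
        Relation.ReflTransGen (fun x y => 0 < M.δ x () y) q0 q)
    {ε : ℝ} (hε : 0 < ε) :
    {i : ℕ | ε < mass (evolve (fun a b => M.δ a () b) d0 i) T}.Finite := by
  set P : Q → Q → ℝ := fun a b => M.δ a () b with hPdef
  have hP0 : ∀ a b, 0 ≤ P a b := fun a b => M.δ_nonneg a () b
  have hP1 : ∀ a, ∑ b, P a b = 1 := fun a => M.δ_sum a ()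
  have hd0n : ∀ x, 0 ≤ d0 x := hd0.1
  have hαpos : 0 < α := hα.1.1
  have hα_lb : ∀ {a b : Q}, 0 < P a b → α ≤ P a b := fun {a b} hab => hα.2 ⟨hab, a, (), b, rfl⟩
  have hα1 : α ≤ 1 := alpha_le_one M hα
  set n := Fintype.card Q with hndef
  have hn1 : 1 ≤ n := by
    obtain ⟨⟨_, qa, _⟩, _⟩ := hα
    exact Fintype.card_pos_iff.2 ⟨qa⟩
  set Efin : Finset Q := Finset.univ.filter (fun x => x ∈ M.ECUnion) with hEf
  set outFin : Finset Q := Finset.univ.filter (fun x => ¬ x ∈ M.ECUnion) with hOf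
  have hEcl' : ∀ c ∈ M.ECUnion, ∀ q', 0 < P c q' → q' ∈ M.ECUnion := ecUnion_closed M
  have hEclF : ∀ c ∈ Efin, ∀ q', 0 < P c q' → q' ∈ Efin := by
    intro c hc q' hq'
    simp only [hEf, Finset.mem_filter, Finset.mem_univ, true_and] at hc ⊢
    exact hEcl' c hc q' hq'
  set pt : Q → Q → ℝ := fun x y => if y = x then (1:ℝ) else 0 with hptdef
  have hpt0 : ∀ x y, 0 ≤ pt x y := by
    intro x y; simp only [hptdef]; split <;> norm_num
  have hptsum : ∀ x, ∑ y, pt x y = 1 := by intro x; simp [hptdef]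
  -- from a state in E, mass never leaves E
  have hinE : ∀ x ∈ M.ECUnion, ∀ j, ∀ c ∈ outFin, evolve P (pt x) j c = 0 := by
    intro x hx j c hc
    have hsupp := evolve_supp P hP0 hP1 (pt x) (hpt0 x) (R := M.ECUnion) hEcl'
      (fun y hy => by
        by_cases hyx : y = x
        · exact hyx ▸ hx
        · simp [hptdef, hyx] at hy)
    have hcE : ¬ c ∈ M.ECUnion := by simpa [hOf] using hc
    by_contra hne
    have hpos : 0 < evolve P (pt x) j c :=
      lt_of_le_of_ne (evolve_nonneg P hP0 hP1 (pt x) (hpt0 x) j c) (Ne.symm hne)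
    exact hcE (hsupp j c hpos)
  -- from a state outside E, at least α^n enters E within n steps
  have hptout : ∀ x, ¬ x ∈ M.ECUnion → ∑ c ∈ outFin, evolve P (pt x) n c ≤ 1 - α^n := by
    intro x hx
    obtain ⟨e, heE, hre⟩ := reach_EC M x
    obtain ⟨ℓ0, hp0⟩ := pathN_of_rtg _ hre
    obtain ⟨ℓ, hℓn, hpℓ⟩ := pathN_shorten _ hp0
    have h1 := evolve_path_ge P hP0 hP1 (pt x) (hpt0 x) hα_lb hαpos.le hpℓ 0
    rw [zero_add] at h1
    have hptxx : evolve P (pt x) 0 x = 1 := by simp [evolve, hptdef]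
    rw [hptxx, one_mul] at h1
    have heEf : e ∈ Efin := by simp [hEf, heE]
    have h2 : α^n ≤ ∑ c ∈ Efin, evolve P (pt x) ℓ c := by
      calc α^n ≤ α^ℓ := pow_le_pow_of_le_one hαpos.le hα1 (by omega)
        _ ≤ evolve P (pt x) ℓ e := h1
        _ ≤ ∑ c ∈ Efin, evolve P (pt x) ℓ c :=
            Finset.single_le_sum (fun c _ => evolve_nonneg P hP0 hP1 (pt x) (hpt0 x) ℓ c) heEf
    have h3 : α^n ≤ ∑ c ∈ Efin, evolve P (pt x) n c :=
      h2.trans (evolve_closed_mono' P hP0 hP1 (pt x) (hpt0 x) hEclF (by omega))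
    have htot : ∑ c ∈ Efin, evolve P (pt x) n c + ∑ c ∈ outFin, evolve P (pt x) n c = 1 := by
      rw [hEf, hOf, Finset.sum_filter_add_sum_filter_not]
      rw [evolve_total P hP0 hP1 (pt x) (hpt0 x) n, hptsum x]
    linarith
  -- one-round decay of the mass outside E
  have hdecay : ∀ i, ∑ c ∈ outFin, evolve P d0 (i+n) c
      ≤ (1-α^n) * ∑ c ∈ outFin, evolve P d0 i c := by
    intro i
    have e1 : ∑ c ∈ outFin, evolve P d0 (i+n) c
        = ∑ x, evolve P d0 i x * ∑ c ∈ outFin, evolve P (pt x) n c := by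
      rw [Finset.sum_congr rfl (fun c _ => evolve_add P hP0 hP1 d0 hd0n i n c)]
      rw [Finset.sum_comm]
      exact Finset.sum_congr rfl fun x _ => by rw [Finset.mul_sum]
    rw [e1, ← Finset.sum_filter_add_sum_filter_not Finset.univ (fun x => x ∈ M.ECUnion)]
    have hz : ∑ x ∈ Finset.univ.filter (fun x => x ∈ M.ECUnion),
        evolve P d0 i x * ∑ c ∈ outFin, evolve P (pt x) n c = 0 := by
      refine Finset.sum_eq_zero fun x hx => ?_
      have hxE : x ∈ M.ECUnion := by simpa using hx
      rw [Finset.sum_eq_zero (fun c hc => hinE x hxE n c hc), mul_zero]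
    rw [hz, zero_add]
    calc ∑ x ∈ Finset.univ.filter (fun x => ¬ x ∈ M.ECUnion),
          evolve P d0 i x * ∑ c ∈ outFin, evolve P (pt x) n c
        ≤ ∑ x ∈ Finset.univ.filter (fun x => ¬ x ∈ M.ECUnion), evolve P d0 i x * (1-α^n) := by
          refine Finset.sum_le_sum fun x hx => ?_
          have hxE : ¬ x ∈ M.ECUnion := by simpa using hx
          exact mul_le_mul_of_nonneg_left (hptout x hxE) (evolve_nonneg P hP0 hP1 d0 hd0n i x)
      _ = (1-α^n) * ∑ c ∈ outFin, evolve P d0 i c := by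
          rw [← Finset.sum_mul, mul_comm, hOf]
  -- total mass splitting and monotonicity
  have htotd : ∀ i, ∑ c ∈ Efin, evolve P d0 i c + ∑ c ∈ outFin, evolve P d0 i c = 1 := by
    intro i
    rw [hEf, hOf, Finset.sum_filter_add_sum_filter_not]
    rw [evolve_total P hP0 hP1 d0 hd0n i, hd0.2]
  have houtmono : ∀ i j, i ≤ j →
      ∑ c ∈ outFin, evolve P d0 j c ≤ ∑ c ∈ outFin, evolve P d0 i c := by
    intro i j hij
    have hEm := evolve_closed_mono' P hP0 hP1 d0 hd0n hEclF hij
    linarith [htotd i, htotd j]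
  have hαn1 : α^n ≤ 1 := pow_le_one₀ hαpos.le hα1
  have hαnpos : 0 < α^n := pow_pos hαpos n
  have houtpow : ∀ m : ℕ, ∑ c ∈ outFin, evolve P d0 (m*n) c ≤ (1-α^n)^m := by
    intro m
    induction m with
    | zero =>
      have h0 : 0 ≤ ∑ c ∈ Efin, evolve P d0 0 c :=
        Finset.sum_nonneg fun c _ => evolve_nonneg P hP0 hP1 d0 hd0n 0 c
      have := htotd 0
      simpa using by linarith
    | succ j ih =>
      have e : (j+1)*n = j*n + n := by ring
      rw [e, pow_succ]
      calc ∑ c ∈ outFin, evolve P d0 (j*n + n) c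
          ≤ (1-α^n) * ∑ c ∈ outFin, evolve P d0 (j*n) c := hdecay (j*n)
        _ ≤ (1-α^n) * (1-α^n)^j := mul_le_mul_of_nonneg_left ih (by linarith)
        _ = (1-α^n)^j * (1-α^n) := by ring
  -- support stays in reachable set
  set R : Set Q := {y | ∃ q0 ∈ supp d0, Relation.ReflTransGen (fun a b => 0 < P a b) q0 y}
    with hRdef
  have hRcl : ∀ y ∈ R, ∀ q', 0 < P y q' → q' ∈ R := by
    rintro y ⟨q0, h0, hr⟩ q' hq'
    exact ⟨q0, h0, hr.tail hq'⟩
  have hsuppR : ∀ i y, 0 < evolve P d0 i y → y ∈ R :=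
    evolve_supp P hP0 hP1 d0 hd0n hRcl (fun y hy => ⟨y, hy, .refl⟩)
  have hmassle : ∀ i, mass (evolve P d0 i) T ≤ ∑ c ∈ outFin, evolve P d0 i c := by
    intro i
    rw [mass_eq_filter]
    have h1 : ∑ c ∈ Finset.univ.filter (· ∈ T), evolve P d0 i c
        = ∑ c ∈ (Finset.univ.filter (· ∈ T)).filter (fun x => ¬ x ∈ M.ECUnion),
            evolve P d0 i c := by
      refine (Finset.sum_subset (Finset.filter_subset _ _) ?_).symm
      intro c hcT hcnot
      have hcE : c ∈ M.ECUnion := by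
        by_contra hc; exact hcnot (Finset.mem_filter.2 ⟨hcT, hc⟩)
      by_contra hne
      have hpos : 0 < evolve P d0 i c :=
        lt_of_le_of_ne (evolve_nonneg P hP0 hP1 d0 hd0n i c) (Ne.symm hne)
      obtain ⟨q0, h0, hr⟩ := hsuppR i c hpos
      have hcT' : c ∈ T := by simpa using hcT
      exact hno ⟨q0, h0, c, ⟨hcT', hcE⟩, hr⟩
    rw [h1]
    refine Finset.sum_le_sum_of_subset_of_nonneg ?_
      (fun c _ _ => evolve_nonneg P hP0 hP1 d0 hd0n i c)
    intro c hc
    simp only [Finset.mem_filter, Finset.mem_univ, true_and] at hc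
    simp only [hOf, Finset.mem_filter, Finset.mem_univ, true_and]
    exact hc.2
  obtain ⟨m, hm⟩ := exists_pow_lt_of_lt_one hε (by linarith : 1 - α^n < 1)
  refine Set.Finite.subset (Set.finite_Iio (m*n)) ?_
  intro i hi
  simp only [Set.mem_setOf_eq] at hi
  by_contra hge
  simp only [Set.mem_Iio, not_lt] at hge
  have hfin : mass (evolve P d0 i) T ≤ (1-α^n)^m :=
    (hmassle i).trans ((houtmono (m*n) i hge).trans (houtpow m))
  linarith

end Fwd
end MCaux


open MDP in
/-- In a finite Markov chain (an MDP with a single action), `d0` is boundedly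
weakly synchronizing in `T` iff some state of `T ∩ E` is reachable in the
underlying graph from `Supp(d0)`; moreover, in that case
`M_i(T) ≥ α0 * α^(n + n²)` for infinitely many `i`. -/
theorem stmt19 {Q : Type} [Fintype Q] (M : MDP Q Unit)
    (d0 : Q → ℝ) (hd0 : IsDist d0) (T : Set Q) (α α0 : ℝ)
    (hα : IsLeast {x : ℝ | 0 < x ∧ ∃ q a q', M.δ q a q' = x} α)
    (hα0 : IsLeast {x : ℝ | 0 < x ∧ ∃ q, d0 q = x} α0) :
    ((∃ ε > (0 : ℝ),
        {i : ℕ | ε < mass (M.stepDist (fun _ _ _ => (1 : ℝ)) d0 i) T}.Infinite) ↔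
      ∃ q0 ∈ supp d0, ∃ q ∈ T ∩ M.ECUnion,
        Relation.ReflTransGen (fun x y => 0 < M.δ x () y) q0 q) ∧
    ((∃ q0 ∈ supp d0, ∃ q ∈ T ∩ M.ECUnion,
        Relation.ReflTransGen (fun x y => 0 < M.δ x () y) q0 q) →
      {i : ℕ |
        α0 * α ^ (Fintype.card Q + Fintype.card Q ^ 2) ≤
          mass (M.stepDist (fun _ _ _ => (1 : ℝ)) d0 i) T}.Infinite) := by
  have hrw : ∀ i, M.stepDist (fun _ _ _ => (1:ℝ)) d0 i
      = MCaux.evolve (fun a b => M.δ a () b) d0 i :=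
    fun i => funext fun q => MCaux.stepDist_eq M d0 i q
  have hc : 0 < α0 * α ^ (Fintype.card Q + Fintype.card Q ^ 2) :=
    mul_pos hα0.1.1 (pow_pos hα.1.1 _)
  constructor
  · constructor
    · rintro ⟨ε, hε, hinf⟩
      by_contra hno
      simp only [hrw] at hinf
      exact hinf (MCaux.forward M d0 hd0 T α hα hno hε)
    · intro h
      have h2 := MCaux.main2 M d0 hd0 T α α0 hα hα0 h
      simp only [hrw]
      refine ⟨α0 * α ^ (Fintype.card Q + Fintype.card Q ^ 2) / 2, by linarith, ?_⟩
      refine h2.mono fun i hi => ?_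
      simp only [Set.mem_setOf_eq] at hi ⊢
      linarith
  · intro h
    have h2 := MCaux.main2 M d0 hd0 T α α0 hα hα0 h
    simpa only [hrw] using h2
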